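/- Let w be the positive radial solution of the basic cell problem (radially symmetric about the origin), and suppose the support of (w−1)₊ is the closed ball B̄_R(0) for some R > 0. Set m_* = ∫_{ℝ³} (w−1)₊^p dx. Then m_* = 4πR and w(x) = m_*/(4π|x|) for every x ∈ ℝ³ with |x| ≥ R. -/

import Mathlib

open MeasureTheory Filter

/-- The Laplacian on `ℝ³` (Euclidean space), as the sum of second partial derivatives. -/
noncomputable def lap (f : EuclideanSpace ℝ (Fin 3) → ℝ) (x : EuclideanSpace ℝ (Fin 3)) : ℝ :=
  ∑ i : Fin 3,
    iteratedFDeriv ℝ 2 f x ![EuclideanSpace.single i 1, EuclideanSpace.single i 1]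

/-- A solution of the basic cell problem: `w ∈ C²(ℝ³)`, `−Δw = (w−1)₊^p` in `ℝ³`,
and `w(x) → 0` as `|x| → ∞`. -/
def IsCellSolution (p : ℝ) (w : EuclideanSpace ℝ (Fin 3) → ℝ) : Prop :=
  ContDiff ℝ 2 w ∧ (∀ x, - lap w x = (max (w x - 1) 0) ^ p) ∧
    Tendsto w (cocompact (EuclideanSpace ℝ (Fin 3))) (nhds 0)

lemma second_deriv_line {E : Type*} [NormedAddCommGroup E] [NormedSpace ℝ E]
    {w : E → ℝ} (hw : ContDiff ℝ 2 w) (x v : E) :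
    fderiv ℝ (fderiv ℝ w) x v v = deriv (deriv (fun t : ℝ => w (x + t • v))) 0 := by
  have hw1 : Differentiable ℝ w := hw.differentiable two_ne_zero
  have hw2 : Differentiable ℝ (fderiv ℝ w) := by
    have h2 : ContDiff ℝ ((1:ℕ)+1) w := by exact_mod_cast hw
    exact ((contDiff_succ_iff_fderiv.mp h2).2.2).differentiable (by norm_num)
  have hline : ∀ t : ℝ, HasDerivAt (fun s : ℝ => x + s • v) v t := by
    intro t
    simpa using ((hasDerivAt_id t).smul_const v).const_add x
  have step1 : ∀ t : ℝ, deriv (fun s : ℝ => w (x + s • v)) t = fderiv ℝ w (x + t • v) v := by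
    intro t
    exact ((hw1 (x + t • v)).hasFDerivAt.comp_hasDerivAt t (hline t)).deriv
  have step2 : HasDerivAt (fun t : ℝ => fderiv ℝ w (x + t • v))
      (fderiv ℝ (fderiv ℝ w) x v) 0 := by
    have h0 : x + (0:ℝ) • v = x := by simp
    have := ((hw2 (x + (0:ℝ) • v)).hasFDerivAt.comp_hasDerivAt 0 (hline 0))
    rwa [h0] at this
  have step3 : HasDerivAt (fun t : ℝ => fderiv ℝ w (x + t • v) v)
      (fderiv ℝ (fderiv ℝ w) x v v) 0 := by
    simpa using step2.clm_apply (hasDerivAt_const 0 v)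
  rw [funext step1] at *
  · exact step3.deriv.symm

section
variable (w : EuclideanSpace ℝ (Fin 3) → ℝ)

noncomputable def phi (r : ℝ) : ℝ := w (r • EuclideanSpace.single (0:Fin 3) (1:ℝ))

lemma lap_radial (hw : ContDiff ℝ 2 w)
    (hrad : ∀ x y : EuclideanSpace ℝ (Fin 3), ‖x‖ = ‖y‖ → w x = w y)
    (r : ℝ) (hr : 0 < r) :
    lap w (r • EuclideanSpace.single (0:Fin 3) (1:ℝ))
      = deriv (deriv (phi w)) r + 2 * (deriv (phi w) r / r) := by
  set e : Fin 3 → EuclideanSpace ℝ (Fin 3) := fun i => EuclideanSpace.single i (1:ℝ) with he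
  set x : EuclideanSpace ℝ (Fin 3) := r • e 0 with hx
  have hφc : ContDiff ℝ 2 (phi w) := hw.comp (contDiff_id.smul contDiff_const)
  have hφd : Differentiable ℝ (phi w) := hφc.differentiable two_ne_zero
  have hφ'd : Differentiable ℝ (deriv (phi w)) := by
    have h2 : ContDiff ℝ ((1:ℕ)+1) (phi w) := by exact_mod_cast hφc
    exact ((contDiff_succ_iff_deriv.mp h2).2.2).differentiable (by norm_num)
  have hval : ∀ y : EuclideanSpace ℝ (Fin 3), w y = phi w ‖y‖ := by
    intro y
    apply hrad
    rw [norm_smul, EuclideanSpace.norm_single]; simp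
  -- laplacian as sum of second directional derivatives
  have hterm : ∀ i : Fin 3, iteratedFDeriv ℝ 2 w x ![e i, e i]
      = deriv (deriv (fun t : ℝ => w (x + t • e i))) 0 := by
    intro i
    rw [iteratedFDeriv_two_apply]
    simpa using second_deriv_line hw x (e i)
  -- the term i = 0
  have h0 : deriv (deriv (fun t : ℝ => w (x + t • e 0))) 0 = deriv (deriv (phi w)) r := by
    have hfun : (fun t : ℝ => w (x + t • e 0)) = fun t => phi w (r + t) := by
      funext t
      rw [hx]
      rw [← add_smul]
      rfl
    rw [hfun]
    have h1 : deriv (fun t : ℝ => phi w (r + t)) = fun t => deriv (phi w) (r + t) := by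
      funext t; exact deriv_comp_const_add _ r t
    rw [h1]
    have h2 := deriv_comp_const_add (deriv (phi w)) r 0
    simpa using h2
  -- the terms i = 1, 2
  have key : ∀ i : Fin 3, ‖x + (0:ℝ) • e i‖ = r → (∀ t : ℝ, ‖x + t • e i‖ = Real.sqrt (r^2 + t^2)) →
      deriv (deriv (fun t : ℝ => w (x + t • e i))) 0 = deriv (phi w) r / r := by
    intro i _ hnorm
    have hfun : (fun t : ℝ => w (x + t • e i)) = fun t => phi w (Real.sqrt (r^2 + t^2)) := by
      funext t
      rw [hval (x + t • e i), hnorm t]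
    rw [hfun]
    set s : ℝ → ℝ := fun t => Real.sqrt (r^2 + t^2) with hs
    have hspos : ∀ t, 0 < s t := by
      intro t
      exact Real.sqrt_pos.mpr (by positivity)
    have hsd : ∀ t, HasDerivAt s (t / s t) t := by
      intro t
      have h1 : HasDerivAt (fun t : ℝ => r^2 + t^2) (2*t) t := by
        simpa using (hasDerivAt_pow 2 t).const_add (r^2)
      have h2 : (r^2 + t^2) ≠ 0 := by positivity
      have := (Real.hasDerivAt_sqrt h2).comp t h1
      refine this.congr_deriv ?_
      rw [hs]
      field_simp
    have hq : ∀ t, HasDerivAt (fun t => phi w (s t)) (deriv (phi w) (s t) * (t / s t)) t := by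
      intro t
      exact ((hφd (s t)).hasDerivAt.comp t (hsd t))
    have hderiv1 : deriv (fun t => phi w (s t)) = fun t => deriv (phi w) (s t) * (t / s t) :=
      funext fun t => (hq t).deriv
    rw [hderiv1]
    have hs0 : s 0 = r := by
      rw [hs]; simp [Real.sqrt_sq hr.le]
    have hu : HasDerivAt (fun t => deriv (phi w) (s t))
        (deriv (deriv (phi w)) (s 0) * ((0:ℝ) / s 0)) 0 :=
      ((hφ'd (s 0)).hasDerivAt.comp 0 (hsd 0))
    have hv : HasDerivAt (fun t : ℝ => t / s t)
        ((1 * s 0 - 0 * ((0:ℝ) / s 0)) / (s 0)^2) 0 :=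
      (hasDerivAt_id 0).div (hsd 0) (hspos 0).ne'
    have hprod := hu.mul hv
    have := hprod.deriv
    erw [this]
    rw [hs0]
    field_simp
    ring
  have hkey1 := key 1
  have hkey2 := key 2
  rw [lap, Fin.sum_univ_three]
  rw [hterm 0, hterm 1, hterm 2, h0]
  rw [hkey1 ?n1 ?h1, hkey2 ?n2 ?h2]
  · ring
  case n1 =>
    rw [hx]; simp [norm_smul, he, abs_of_pos hr]
  case h1 =>
    intro t
    rw [hx, he, EuclideanSpace.norm_eq]
    congr 1
    simp [Fin.sum_univ_three, EuclideanSpace.single_apply, sq_abs]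
  case n2 =>
    rw [hx]; simp [norm_smul, he, abs_of_pos hr]
  case h2 =>
    intro t
    rw [hx, he, EuclideanSpace.norm_eq]
    congr 1
    simp [Fin.sum_univ_three, EuclideanSpace.single_apply, sq_abs]
end

/-- let `w` be the positive radial (about the origin) solution of the basic
cell problem, whose set `supp (w−1)₊` has closure equal to the closed ball `B̄_R(0)`,
`R > 0`, and let `m_* = ∫ (w−1)₊^p`. Then `m_* = 4πR` and `w(x) = m_*/(4π|x|)` for
`|x| ≥ R`. -/
theorem stmt11 (p : ℝ) (hp1 : 3 / 2 < p) (hp2 : p < 5)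
    (w : EuclideanSpace ℝ (Fin 3) → ℝ) (hw : IsCellSolution p w) (hpos : ∀ x, 0 < w x)
    (hrad : ∀ x y : EuclideanSpace ℝ (Fin 3), ‖x‖ = ‖y‖ → w x = w y)
    (R : ℝ) (hR : 0 < R)
    (hsupp : tsupport (fun x => max (w x - 1) 0)
      = Metric.closedBall (0 : EuclideanSpace ℝ (Fin 3)) R)
    (mstar : ℝ)
    (hmstar : mstar = ∫ x : EuclideanSpace ℝ (Fin 3), (max (w x - 1) 0) ^ p) :
    mstar = 4 * Real.pi * R ∧
    ∀ x : EuclideanSpace ℝ (Fin 3), R ≤ ‖x‖ → w x = mstar / (4 * Real.pi * ‖x‖) := by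
  obtain ⟨hwC, hpde, hlim⟩ := hw
  have hp0 : (0:ℝ) < p := lt_trans (by norm_num) hp1
  set e0 : EuclideanSpace ℝ (Fin 3) := EuclideanSpace.single (0:Fin 3) (1:ℝ) with he0
  set φ : ℝ → ℝ := phi w with hφdef
  have hφc : ContDiff ℝ 2 φ := hwC.comp (contDiff_id.smul contDiff_const)
  have hφd : Differentiable ℝ φ := hφc.differentiable two_ne_zero
  have hφ'd : Differentiable ℝ (deriv φ) := by
    have h2 : ContDiff ℝ ((1:ℕ)+1) φ := by exact_mod_cast hφc
    exact ((contDiff_succ_iff_deriv.mp h2).2.2).differentiable (by norm_num)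
  have hφ'c : Continuous (deriv φ) := hφ'd.continuous
  have hval : ∀ y : EuclideanSpace ℝ (Fin 3), w y = φ ‖y‖ := by
    intro y
    apply hrad
    rw [norm_smul, EuclideanSpace.norm_single]; simp
  have hne0 : ∀ s : ℝ, 0 ≤ s → ‖s • e0‖ = s := by
    intro s hs
    rw [norm_smul, EuclideanSpace.norm_single]
    simp [abs_of_nonneg hs]
  set g : ℝ → ℝ := fun r => (max (φ r - 1) 0) ^ p with hgdef
  have hgc : Continuous g := by
    apply Continuous.rpow_const
    · exact (hφc.continuous.sub continuous_const).max continuous_const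
    · exact fun x => Or.inr hp0.le
  set h : ℝ → ℝ := fun r => r ^ 2 * g r with hhdef
  have hhc : Continuous h := (continuous_pow 2).mul hgc
  -- the radial ODE
  have hode : ∀ r : ℝ, 0 < r →
      deriv (deriv φ) r + 2 * (deriv φ r / r) = -(g r) := by
    intro r hr
    have h1 := lap_radial w hwC hrad r hr
    have h2 := hpde (r • e0)
    have h3 : w (r • e0) = φ r := rfl
    rw [h3] at h2
    rw [← hφdef] at h1
    rw [h1] at h2
    linarith [h2]
  set ψ : ℝ → ℝ := fun r => r ^ 2 * deriv φ r with hψdef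
  have hψd : ∀ r : ℝ, 0 ≤ r → HasDerivAt ψ (-(h r)) r := by
    intro r hr
    have base : HasDerivAt (fun y : ℝ => y ^ 2 * deriv φ y)
        ((2:ℕ) * r ^ 1 * deriv φ r + r ^ 2 * deriv (deriv φ) r) r :=
      (hasDerivAt_pow 2 r).mul (hφ'd r).hasDerivAt
    rcases eq_or_lt_of_le hr with hr0 | hr0
    · have : -(h r) = ((2:ℕ) * r ^ 1 * deriv φ r + r ^ 2 * deriv (deriv φ) r) := by
        rw [← hr0]; simp [hhdef]
      rw [this]; exact base
    · have hφ'' : deriv (deriv φ) r = -(g r) - 2 * (deriv φ r / r) := by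
        linarith [hode r hr0]
      have : -(h r) = ((2:ℕ) * r ^ 1 * deriv φ r + r ^ 2 * deriv (deriv φ) r) := by
        rw [hφ'', hhdef]
        field_simp
        ring
      rw [this]; exact base
  have hFTC : ∀ b : ℝ, 0 ≤ b → ψ b = - ∫ t in (0:ℝ)..b, h t := by
    intro b hb
    have hi : IntervalIntegrable (fun t => -(h t)) volume 0 b :=
      (hhc.neg).intervalIntegrable 0 b
    have := intervalIntegral.integral_eq_sub_of_hasDerivAt
      (f := ψ) (f' := fun t => -(h t)) (fun t ht => by
        rw [Set.uIcc_of_le hb] at ht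
        exact hψd t ht.1) hi
    rw [intervalIntegral.integral_neg] at this
    have hψ0 : ψ 0 = 0 := by simp [hψdef]
    rw [hψ0] at this
    linarith [this]
  -- the boundary value
  have hout : ∀ s : ℝ, R < s → max (φ s - 1) 0 = 0 := by
    intro s hs
    have hnm : (s • e0) ∉ tsupport (fun x => max (w x - 1) 0) := by
      rw [hsupp]
      simp only [Metric.mem_closedBall, dist_zero_right]
      rw [hne0 s (le_trans hR.le (le_of_lt hs))]
      exact not_le.mpr hs
    have := image_eq_zero_of_notMem_tsupport hnm
    simpa [hval (s • e0), hne0 s (le_trans hR.le (le_of_lt hs))] using this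
  have hφR : φ R = 1 := by
    have hge : 1 ≤ φ R := by
      have hmem : (R • e0) ∈ tsupport (fun x => max (w x - 1) 0) := by
        rw [hsupp]
        simp only [Metric.mem_closedBall, dist_zero_right]
        rw [hne0 R hR.le]
      have hsub : tsupport (fun x => max (w x - 1) 0) ⊆ {x | 1 ≤ w x} := by
        apply closure_minimal
        · intro x hx
          simp only [Function.mem_support] at hx
          rcases le_or_gt (w x) 1 with hle | hlt
          · exact absurd (max_eq_right (by linarith)) hx
          · exact hlt.le
        · exact isClosed_le continuous_const hwC.continuous
      have := hsub hmem
      simpa [hval (R • e0), hne0 R hR.le] using this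
    have hle : φ R ≤ 1 := by
      have ht : Filter.Tendsto φ (nhdsWithin R (Set.Ioi R)) (nhds (φ R)) :=
        (hφc.continuous.continuousAt).continuousWithinAt
      refine le_of_tendsto ht ?_
      refine eventually_nhdsWithin_of_forall (fun s hs => ?_)
      have := hout s hs
      have h1 : φ s - 1 ≤ max (φ s - 1) 0 := le_max_left _ _
      linarith [h1.trans_eq this]
    linarith
  have hg0 : ∀ s : ℝ, R ≤ s → g s = 0 := by
    intro s hs
    rcases eq_or_lt_of_le hs with hs0 | hs0
    · rw [hgdef]
      simp only [← hs0, hφR, sub_self, max_self]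
      exact Real.zero_rpow hp0.ne'
    · rw [hgdef]; simp only [hout s hs0]
      exact Real.zero_rpow hp0.ne'
  set c : ℝ := ∫ t in (0:ℝ)..R, h t with hcdef
  have hψR : ∀ b : ℝ, R ≤ b → ψ b = -c := by
    intro b hb
    rw [hFTC b (hR.le.trans hb)]
    have hsplit : (∫ t in (0:ℝ)..R, h t) + (∫ t in R..b, h t) = ∫ t in (0:ℝ)..b, h t :=
      intervalIntegral.integral_add_adjacent_intervals
        (hhc.intervalIntegrable 0 R) (hhc.intervalIntegrable R b)
    have hz : (∫ t in R..b, h t) = 0 := by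
      have : Set.EqOn h 0 (Set.uIcc R b) := by
        intro t ht
        rw [Set.uIcc_of_le hb] at ht
        simp [hhdef, hg0 t ht.1]
      rw [intervalIntegral.integral_congr this]
      simp
    rw [← hsplit, hz, add_zero]
  have hφ'R : ∀ b : ℝ, R ≤ b → deriv φ b = -c / b ^ 2 := by
    intro b hb
    have hbpos : 0 < b := hR.trans_le hb
    have h1 : b ^ 2 * deriv φ b = -c := hψR b hb
    field_simp
    linarith [h1]
  -- limit of φ at infinity
  have hphiInf : Filter.Tendsto φ Filter.atTop (nhds 0) := by
    have h1 : Filter.Tendsto (fun b : ℝ => b • e0) Filter.atTop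
        (Filter.cocompact (EuclideanSpace ℝ (Fin 3))) := by
      apply tendsto_cocompact_of_tendsto_dist_comp_atTop (0 : EuclideanSpace ℝ (Fin 3))
      have : (fun b : ℝ => dist (b • e0) 0) = fun b => |b| := by
        funext b
        rw [dist_zero_right, norm_smul, EuclideanSpace.norm_single]
        simp
      rw [this]
      exact tendsto_abs_atTop_atTop
    exact hlim.comp h1
  -- the tail formula
  have htail : ∀ r : ℝ, R ≤ r → φ r = c / r := by
    intro r hr
    have hrpos : 0 < r := hR.trans_le hr
    have hstep : ∀ b : ℝ, r ≤ b → φ b - φ r = c / b - c / r := by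
      intro b hb
      have hbpos : 0 < b := hrpos.trans_le hb
      have hd1 : ∀ t ∈ Set.uIcc r b, HasDerivAt φ (deriv φ t) t :=
        fun t _ => (hφd t).hasDerivAt
      have hint : IntervalIntegrable (deriv φ) volume r b := hφ'c.intervalIntegrable r b
      have hF1 := intervalIntegral.integral_eq_sub_of_hasDerivAt hd1 hint
      have hd2 : ∀ t ∈ Set.uIcc r b, HasDerivAt (fun s => c / s) (deriv φ t) t := by
        intro t ht
        rw [Set.uIcc_of_le hb] at ht
        have htpos : 0 < t := hrpos.trans_le ht.1
        have hder : HasDerivAt (fun s : ℝ => c * s⁻¹) (c * (-(t ^ 2)⁻¹)) t :=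
          (hasDerivAt_inv htpos.ne').const_mul c
        have heq : c * (-(t ^ 2)⁻¹) = deriv φ t := by
          rw [hφ'R t (hr.trans ht.1)]
          field_simp
        rw [← heq]
        simpa [div_eq_mul_inv] using hder
      have hF2 := intervalIntegral.integral_eq_sub_of_hasDerivAt hd2 hint
      rw [hF1] at hF2
      linarith [hF2]
    have hlim1 : Filter.Tendsto (fun b => φ b - φ r) Filter.atTop (nhds (0 - φ r)) :=
      hphiInf.sub tendsto_const_nhds
    have hlim2 : Filter.Tendsto (fun b => c / b - c / r) Filter.atTop (nhds (0 - c / r)) := by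
      apply Filter.Tendsto.sub _ tendsto_const_nhds
      exact tendsto_const_nhds.div_atTop Filter.tendsto_id
    have hEq : (fun b => φ b - φ r) =ᶠ[Filter.atTop] fun b => c / b - c / r := by
      filter_upwards [Filter.eventually_ge_atTop r] with b hb
      exact hstep b hb
    have := Filter.Tendsto.congr' hEq hlim1
    have huniq := tendsto_nhds_unique this hlim2
    field_simp at huniq ⊢
    linarith [huniq]
  have hcR : c = R := by
    have h1 := htail R le_rfl
    rw [hφR] at h1
    field_simp at h1
    linarith [h1]
  -- the integral identity
  have hmint : mstar = 4 * Real.pi * c := by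
    rw [hmstar]
    have hrw : (fun x : EuclideanSpace ℝ (Fin 3) => (max (w x - 1) 0) ^ p)
        = fun x => g ‖x‖ := by
      funext x
      rw [hval x]
    calc (∫ x : EuclideanSpace ℝ (Fin 3), (max (w x - 1) 0) ^ p)
        = ∫ x : EuclideanSpace ℝ (Fin 3), g ‖x‖ := by rw [hrw]
      _ = (Module.finrank ℝ (EuclideanSpace ℝ (Fin 3))) •
            (volume (Metric.ball (0 : EuclideanSpace ℝ (Fin 3)) 1)).toReal •
            ∫ y in Set.Ioi (0:ℝ), y ^ (Module.finrank ℝ (EuclideanSpace ℝ (Fin 3)) - 1) • g y :=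
          MeasureTheory.integral_fun_norm_addHaar volume g
      _ = 4 * Real.pi * c := by
          rw [finrank_euclideanSpace_fin]
          have hIoi : (∫ y in Set.Ioi (0:ℝ), y ^ (3 - 1) • g y) = c := by
            have heq : (fun y : ℝ => y ^ (3-1) • g y) = h := by
              funext y; simp [hhdef, smul_eq_mul]
            rw [heq]
            have hsplit : (∫ y in Set.Ioi (0:ℝ), h y)
                = (∫ y in Set.Ioc (0:ℝ) R, h y) + ∫ y in Set.Ioi R, h y := by
              rw [← Set.Ioc_union_Ioi_eq_Ioi hR.le]
              refine MeasureTheory.setIntegral_union (Set.Ioc_disjoint_Ioi le_rfl)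
                measurableSet_Ioi ?_ ?_
              · exact hhc.integrableOn_Ioc
              · refine (integrableOn_congr_fun (fun x hx => ?_) measurableSet_Ioi).mpr
                  (integrableOn_zero)
                simp only [Set.mem_Ioi] at hx
                simp [hhdef, hg0 x hx.le, Pi.zero_apply]
            have hz : (∫ y in Set.Ioi R, h y) = 0 := by
              apply MeasureTheory.setIntegral_eq_zero_of_forall_eq_zero
              intro x hx
              simp only [Set.mem_Ioi] at hx
              simp [hhdef, hg0 x hx.le]
            rw [hsplit, hz, add_zero, hcdef, intervalIntegral.integral_of_le hR.le]
          rw [hIoi]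
          have hvol : (volume (Metric.ball (0 : EuclideanSpace ℝ (Fin 3)) 1)).toReal
              = 4 / 3 * Real.pi := by
            rw [EuclideanSpace.volume_ball]
            simp only [Fintype.card_fin, Nat.cast_ofNat]
            have hG : Real.Gamma ((3:ℝ) / 2 + 1) = 3 / 4 * Real.sqrt Real.pi := by
              rw [Real.Gamma_add_one (by norm_num : (3:ℝ)/2 ≠ 0)]
              rw [show (3:ℝ)/2 = 1/2 + 1 by norm_num]
              rw [Real.Gamma_add_one (by norm_num : (1:ℝ)/2 ≠ 0), Real.Gamma_one_half_eq]
              ring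
            rw [hG]
            simp only [ENNReal.ofReal_one, one_pow, one_mul]
            rw [ENNReal.toReal_ofReal (by positivity)]
            have hs3 : Real.sqrt Real.pi ^ 3 = Real.pi * Real.sqrt Real.pi := by
              rw [pow_succ, Real.sq_sqrt Real.pi_pos.le]
            rw [hs3]
            have hne : Real.sqrt Real.pi ≠ 0 := ne_of_gt (Real.sqrt_pos.mpr Real.pi_pos)
            field_simp
          rw [hvol]
          push_cast
          simp only [smul_eq_mul]
          ring
  constructor
  · rw [hmint, hcR]
  · intro x hx
    have hxpos : 0 < ‖x‖ := hR.trans_le hx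
    rw [hval x, htail ‖x‖ hx, hmint]
    field_simp
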